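/- One has q_B ∈ (0,1), W(q_B) = μ − R, and W'(q_B) = 0; that is, the pair (q_B, d_B) solves the smooth-fit (value-matching and derivative-matching) system at the free boundary. -/

import Mathlib

set_option autoImplicit false
set_option maxHeartbeats 1000000

/-- `q_B ∈ (0,1)`, `W(q_B) = μ − R` and `W'(q_B) = 0`: the pair
`(q_B, d_B)` solves the smooth-fit system at the free boundary. -/
theorem stmt_9 (l μ h ρ σt R : ℝ)
    (hl : 0 < l) (hlμ : l < μ) (hμh : μ < h) (hρ : 0 < ρ) (hσt : 0 < σt)
    (hR : 0 < R) (hlR : l < μ - R)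
    (kt qB dB : ℝ)
    (hkt : kt = Real.sqrt (1 + 8 * ρ * (σt / (h - l)) ^ 2))
    (hqB : qB = (l - μ + R) * ((1 - kt) / 2)
      / ((h - l) * ((1 + kt) / 2) + l - μ + R))
    (hdB : dB = (μ - R - qB * h - (1 - qB) * l)
      / (qB ^ ((1 - kt) / 2) * (1 - qB) ^ ((1 + kt) / 2)))
    (W : ℝ → ℝ)
    (hW : ∀ q : ℝ, W q = q * h + (1 - q) * l
      + dB * q ^ ((1 - kt) / 2) * (1 - q) ^ ((1 + kt) / 2)) :
    qB ∈ Set.Ioo (0 : ℝ) 1 ∧ W qB = μ - R ∧ deriv W qB = 0 := by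
  have hhl : 0 < h - l := by linarith
  -- kt > 1
  have hkt1 : 1 < kt := by
    rw [hkt]
    have h1 : (1:ℝ) < 1 + 8 * ρ * (σt / (h - l)) ^ 2 := by
      have : 0 < (σt / (h - l)) ^ 2 := by positivity
      nlinarith
    nlinarith [Real.sq_sqrt (by nlinarith : (0:ℝ) ≤ 1 + 8 * ρ * (σt / (h - l)) ^ 2),
      Real.sqrt_nonneg (1 + 8 * ρ * (σt / (h - l)) ^ 2)]
  set a : ℝ := (1 - kt) / 2 with ha
  set b : ℝ := (1 + kt) / 2 with hb
  have haneg : a < 0 := by rw [ha]; linarith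
  have hb1 : 1 < b := by rw [hb]; linarith
  have hA : l - μ + R < 0 := by linarith
  have hD : 0 < (h - l) * b + (l - μ + R) := by nlinarith
  have hqB0 : 0 < qB := by
    rw [hqB]
    apply div_pos
    · nlinarith
    · nlinarith
  have hqB1 : qB < 1 := by
    rw [hqB]
    rw [div_lt_one (by nlinarith)]
    nlinarith
  have h1qB : 0 < 1 - qB := by linarith
  have hP : (0:ℝ) < qB ^ a := Real.rpow_pos_of_pos hqB0 _
  have hQ : (0:ℝ) < (1 - qB) ^ b := Real.rpow_pos_of_pos h1qB _
  have key : dB * qB ^ a * (1 - qB) ^ b = μ - R - qB * h - (1 - qB) * l := by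
    rw [hdB]; field_simp
  refine ⟨⟨hqB0, hqB1⟩, ?_, ?_⟩
  · rw [hW]; linarith [key]
  · have hWfun : W = fun q : ℝ => q * h + (1 - q) * l + dB * q ^ a * (1 - q) ^ b :=
      funext hW
    have h1 : HasDerivAt (fun q : ℝ => q ^ a) (a * qB ^ (a - 1)) qB :=
      Real.hasDerivAt_rpow_const (Or.inl hqB0.ne')
    have h2' : HasDerivAt (fun q : ℝ => 1 - q) (-1) qB := by
      simpa using (hasDerivAt_id qB).const_sub 1
    have h2 : HasDerivAt (fun q : ℝ => (1 - q) ^ b) (b * (1 - qB) ^ (b - 1) * (-1)) qB :=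
      (Real.hasDerivAt_rpow_const (Or.inl h1qB.ne')).comp qB h2'
    have h3 : HasDerivAt (fun q : ℝ => dB * q ^ a * (1 - q) ^ b)
        (dB * (a * qB ^ (a - 1)) * (1 - qB) ^ b
          + dB * qB ^ a * (b * (1 - qB) ^ (b - 1) * (-1))) qB :=
      (h1.const_mul dB).mul h2
    have h4 : HasDerivAt W
        (h + (-1) * l + (dB * (a * qB ^ (a - 1)) * (1 - qB) ^ b
          + dB * qB ^ a * (b * (1 - qB) ^ (b - 1) * (-1)))) qB := by
      rw [hWfun]
      simpa [Pi.add_def] using (((hasDerivAt_id qB).mul_const h).add (h2'.mul_const l)).add h3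
    rw [h4.deriv]
    have e1 : qB ^ (a - 1) = qB ^ a / qB := by
      rw [Real.rpow_sub hqB0, Real.rpow_one]
    have e2 : (1 - qB) ^ (b - 1) = (1 - qB) ^ b / (1 - qB) := by
      rw [Real.rpow_sub h1qB, Real.rpow_one]
    rw [e1, e2]
    have step : h + (-1) * l + (dB * (a * (qB ^ a / qB)) * (1 - qB) ^ b
          + dB * qB ^ a * (b * ((1 - qB) ^ b / (1 - qB)) * (-1)))
        = h - l + (μ - R - qB * h - (1 - qB) * l) * (a * (1 - qB) - b * qB)
            / (qB * (1 - qB)) := by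
      rw [← key]; field_simp; ring
    rw [step]
    have hD2 : (h - l) * b + l - μ + R ≠ 0 := by
      have : (0:ℝ) < (h - l) * b + l - μ + R := by nlinarith
      exact this.ne'
    have main : (h - l) * (qB * (1 - qB))
        + (μ - R - qB * h - (1 - qB) * l) * (a * (1 - qB) - b * qB) = 0 := by
      rw [hqB]; field_simp; ring
    have hne : qB * (1 - qB) ≠ 0 := by positivity
    field_simp
    linear_combination main
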